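/- Let Γ be a cancellation monoid with neutral element e, A = ⊕_{γ∈Γ} A_γ a Γ-graded ring, and 𝔐 the two-sided ideal of A generated by all non-invertible homogeneous elements. If 𝔐 is a proper ideal of A, then every homogeneous element a ∈ A_γ with a ∉ 𝔐 is invertible with homogeneous inverse, and 𝔐 is the unique maximal graded left, right and two-sided ideal of A: every proper graded left ideal, every proper graded right ideal and every proper graded two-sided ideal of A is contained in 𝔐. -/

import Mathlib

section

variable {Γ : Type*} [AddCancelMonoid Γ] [DecidableEq Γ]
variable {A : Type*} [Ring A] (𝒜 : Γ → AddSubgroup A) [GradedRing 𝒜]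

/-- A left ideal of `A` is graded if it contains all homogeneous components of each of
its elements (equivalently, it is generated by homogeneous elements). -/
def Ideal.IsGradedLeft (I : Ideal A) : Prop :=
  ∀ a ∈ I, ∀ γ : Γ, (DirectSum.decompose 𝒜 a γ : A) ∈ I

/-- A right ideal of `A` (a submodule of `A` over `Aᵐᵒᵖ`) is graded if it contains all
homogeneous components of each of its elements. -/
def Ideal.IsGradedRight (I : Submodule Aᵐᵒᵖ A) : Prop :=
  ∀ a ∈ I, ∀ γ : Γ, (DirectSum.decompose 𝒜 a γ : A) ∈ I

/-- A two-sided ideal of `A` is graded if it contains all homogeneous components of each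
of its elements. -/
def TwoSidedIdeal.IsGraded (I : TwoSidedIdeal A) : Prop :=
  ∀ a ∈ I, ∀ γ : Γ, (DirectSum.decompose 𝒜 a γ : A) ∈ I

/-- **Proposition 2.4(i).**  Let `A` be a `Γ`-graded ring and `𝔐` the two-sided ideal of
`A` generated by all non-invertible homogeneous elements.  If `𝔐` is proper, then every
homogeneous element `a ∈ A_γ` with `a ∉ 𝔐` is invertible with homogeneous inverse, and
`𝔐` is the unique maximal graded left, right and two-sided ideal of `A`: every proper
graded left ideal, every proper graded right ideal and every proper graded two-sided
ideal of `A` is contained in `𝔐`. -/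
theorem span_nonunit_homogeneous_is_unique_maximal_graded_ideal
    (h : TwoSidedIdeal.span {a : A | (a ≠ 0 ∧ ∃ γ : Γ, a ∈ 𝒜 γ) ∧ ¬IsUnit a} ≠ ⊤) :
    (∀ (γ : Γ) (a : A), a ∈ 𝒜 γ → a ≠ 0 →
        a ∉ TwoSidedIdeal.span {a : A | (a ≠ 0 ∧ ∃ γ : Γ, a ∈ 𝒜 γ) ∧ ¬IsUnit a} →
        ∃ b : A, (b ≠ 0 ∧ ∃ γ' : Γ, b ∈ 𝒜 γ') ∧ a * b = 1 ∧ b * a = 1) ∧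
    (∀ I : Ideal A, Ideal.IsGradedLeft 𝒜 I → I ≠ ⊤ → ∀ x ∈ I,
        x ∈ TwoSidedIdeal.span {a : A | (a ≠ 0 ∧ ∃ γ : Γ, a ∈ 𝒜 γ) ∧ ¬IsUnit a}) ∧
    (∀ I : Submodule Aᵐᵒᵖ A, Ideal.IsGradedRight 𝒜 I → I ≠ ⊤ → ∀ x ∈ I,
        x ∈ TwoSidedIdeal.span {a : A | (a ≠ 0 ∧ ∃ γ : Γ, a ∈ 𝒜 γ) ∧ ¬IsUnit a}) ∧
    (∀ I : TwoSidedIdeal A, TwoSidedIdeal.IsGraded 𝒜 I → I ≠ ⊤ →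
        I ≤ TwoSidedIdeal.span {a : A | (a ≠ 0 ∧ ∃ γ : Γ, a ∈ 𝒜 γ) ∧ ¬IsUnit a}) := by
  classical
  set S : Set A := {a : A | (a ≠ 0 ∧ ∃ γ : Γ, a ∈ 𝒜 γ) ∧ ¬IsUnit a} with hS
  set 𝔐 := TwoSidedIdeal.span S with h𝔐
  -- A is nontrivial
  have hnt : (1 : A) ≠ 0 := by
    intro h10
    apply h
    apply TwoSidedIdeal.eq_top
    rw [h10]
    exact 𝔐.zero_mem
  -- key lemma: component of a * b at γ + δ is a * (component of b at δ)
  have key : ∀ (γ δ : Γ) (a b : A), a ∈ 𝒜 γ →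
      (DirectSum.decompose 𝒜 (a * b) (γ + δ) : A) = a * (DirectSum.decompose 𝒜 b δ : A) := by
    intro γ δ a b ha
    induction b using DirectSum.Decomposition.inductionOn 𝒜 with
    | zero => simp
    | @homogeneous i m =>
      by_cases hi : i = δ
      · subst hi
        rw [DirectSum.decompose_of_mem_same 𝒜 (SetLike.coe_mem m),
          DirectSum.decompose_of_mem_same 𝒜 (SetLike.mul_mem_graded ha (SetLike.coe_mem m))]
      · rw [DirectSum.decompose_of_mem_ne 𝒜 (SetLike.coe_mem m) hi,
          DirectSum.decompose_of_mem_ne 𝒜 (SetLike.mul_mem_graded ha (SetLike.coe_mem m))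
            (fun hc => hi (add_left_cancel hc)), mul_zero]
    | add m m' hm hm' =>
      rw [mul_add, DirectSum.decompose_add, DirectSum.decompose_add, DirectSum.add_apply,
        DirectSum.add_apply, AddSubgroup.coe_add, AddSubgroup.coe_add, hm, hm', mul_add]
  -- every nonzero homogeneous element not in 𝔐 is a unit
  have hunit : ∀ (γ : Γ) (a : A), a ∈ 𝒜 γ → a ≠ 0 → a ∉ 𝔐 → IsUnit a := by
    intro γ a haγ ha0 haM
    by_contra hu
    exact haM (TwoSidedIdeal.subset_span ⟨⟨ha0, γ, haγ⟩, hu⟩)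
  -- sums of elements of 𝔐 are in 𝔐
  have hsum : ∀ (s : Finset Γ) (f : Γ → A), (∀ γ ∈ s, f γ ∈ 𝔐) → ∑ γ ∈ s, f γ ∈ 𝔐 := by
    intro s f hf
    induction s using Finset.induction_on with
    | empty => rw [Finset.sum_empty]; exact 𝔐.zero_mem
    | @insert i s his ih =>
      rw [Finset.sum_insert his]
      exact 𝔐.add_mem (hf i (Finset.mem_insert_self i s))
        (ih fun γ hγ => hf γ (Finset.mem_insert_of_mem hγ))
  -- each homogeneous component of an element is either in 𝔐 or a unit
  have hcomp : ∀ (x : A) (γ : Γ), (DirectSum.decompose 𝒜 x γ : A) ∈ 𝔐 ∨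
      IsUnit ((DirectSum.decompose 𝒜 x γ : A)) := by
    intro x γ
    by_cases h0 : (DirectSum.decompose 𝒜 x γ : A) = 0
    · left; rw [h0]; exact 𝔐.zero_mem
    by_cases hu : IsUnit ((DirectSum.decompose 𝒜 x γ : A))
    · right; exact hu
    · left
      exact TwoSidedIdeal.subset_span ⟨⟨h0, γ, SetLike.coe_mem _⟩, hu⟩
  refine ⟨?_, ?_, ?_, ?_⟩
  · -- part 1
    intro γ a haγ ha0 haM
    obtain ⟨u, hu⟩ := hunit γ a haγ ha0 haM
    have hab : a * ((u⁻¹ : Aˣ) : A) = 1 := by rw [← hu]; exact u.mul_inv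
    have hba : ((u⁻¹ : Aˣ) : A) * a = 1 := by rw [← hu]; exact u.inv_mul
    set b : A := ((u⁻¹ : Aˣ) : A) with hb
    by_cases hδ : ∃ δ : Γ, γ + δ = 0
    · obtain ⟨δ, hδ0⟩ := hδ
      have h1 : (DirectSum.decompose 𝒜 (a * b) (γ + δ) : A) = a * (DirectSum.decompose 𝒜 b δ : A) :=
        key γ δ a b haγ
      rw [hab, hδ0, DirectSum.decompose_of_mem_same 𝒜 (SetLike.one_mem_graded 𝒜)] at h1
      have hbb : b = (DirectSum.decompose 𝒜 b δ : A) := by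
        calc b = b * (a * (DirectSum.decompose 𝒜 b δ : A)) := by rw [← h1, mul_one]
        _ = (b * a) * (DirectSum.decompose 𝒜 b δ : A) := by rw [mul_assoc]
        _ = (DirectSum.decompose 𝒜 b δ : A) := by rw [hba, one_mul]
      refine ⟨b, ⟨?_, δ, hbb ▸ SetLike.coe_mem _⟩, hab, hba⟩
      intro hb0
      rw [hb0, mul_zero] at hab
      exact hnt hab.symm
    · -- no δ with γ + δ = 0: then a*b has zero component in degree 0, contradiction
      exfalso
      push_neg at hδ
      apply hnt
      have h1 : (1 : A) = DirectSum.decompose 𝒜 (a * b) 0 := by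
        rw [hab, DirectSum.decompose_of_mem_same 𝒜 (SetLike.one_mem_graded 𝒜)]
      rw [h1]
      -- decompose b into components
      conv_lhs => rw [← DirectSum.sum_support_decompose 𝒜 b]
      rw [Finset.mul_sum, DirectSum.decompose_sum]
      rw [DFinsupp.finset_sum_apply]
      push_cast
      apply Finset.sum_eq_zero
      intro δ _
      exact DirectSum.decompose_of_mem_ne 𝒜
        (SetLike.mul_mem_graded haγ (SetLike.coe_mem _)) (hδ δ)
  · -- graded left ideals
    intro I hI hItop x hx
    rw [← DirectSum.sum_support_decompose 𝒜 x]
    apply hsum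
    intro γ _
    rcases hcomp x γ with hm | hu
    · exact hm
    · exact absurd (I.eq_top_of_isUnit_mem (hI x hx γ) hu) hItop
  · -- graded right ideals
    intro I hI hItop x hx
    rw [← DirectSum.sum_support_decompose 𝒜 x]
    apply hsum
    intro γ _
    rcases hcomp x γ with hm | hu
    · exact hm
    · exfalso
      apply hItop
      rw [Submodule.eq_top_iff']
      intro y
      obtain ⟨u, hu⟩ := hu
      have : (MulOpposite.op (((u⁻¹ : Aˣ) : A) * y)) •
          (DirectSum.decompose 𝒜 x γ : A) ∈ I := I.smul_mem _ (hI x hx γ)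
      simpa [MulOpposite.smul_eq_mul_unop, ← hu, ← mul_assoc] using this
  · -- graded two-sided ideals
    intro I hI hItop x hx
    rw [← DirectSum.sum_support_decompose 𝒜 x]
    apply hsum
    intro γ _
    rcases hcomp x γ with hm | hu
    · exact hm
    · exfalso
      apply hItop
      apply TwoSidedIdeal.eq_top
      obtain ⟨u, hu⟩ := hu
      have : (DirectSum.decompose 𝒜 x γ : A) * ((u⁻¹ : Aˣ) : A) ∈ I :=
        I.mul_mem_right _ _ (hI x hx γ)
      rwa [← hu, u.mul_inv] at this

end
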